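/- In a q-tame persistence module (H_b, i_{b,a}), for fixed 0 < a < b ≤ ∞ define for c ∈ (a,b]: V_c = {h ∈ H_c : α(h) ≤ a, β(h) ≤ b}, W_c = {h ∈ H_c : α(h) < a, β(h) ≤ b}, Z_c = {h ∈ H_c : α(h) ≤ a, β(h) < b}. Then for a < c < d ≤ b, the structure map i_{d,c} induces an isomorphism V_c/(W_c + Z_c) ≅ V_d/(W_d + Z_d). In particular dim V_c/(W_c+Z_c) is independent of c ∈ (a,b]. -/
import Mathlib


open scoped ENNReal

/-- In a q-tame persistence module `(H_b, i_{b,a})` over `(0,∞]`, for fixed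
`0 < a < b ≤ ∞` and `a < c < d ≤ b`, with
`V_c = {h : α(h) ≤ a, β(h) ≤ b}`, `W_c = {h : α(h) < a, β(h) ≤ b}`,
`Z_c = {h : α(h) ≤ a, β(h) < b}` (as subspaces of `H_c`, similarly at `d`),
the structure map `i_{d,c}` maps `V_c` into `V_d` and induces an isomorphism
`V_c/(W_c + Z_c) ≅ V_d/(W_d + Z_d)`; in particular `dim V_c/(W_c+Z_c)` is
independent of `c ∈ (a,b]`. -/
theorem stmt6 {F : Type*} [Field F]
    (H : ℝ≥0∞ → Type*) [∀ x, AddCommGroup (H x)] [∀ x, Module F (H x)]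
    (i : ∀ x y : ℝ≥0∞, H x →ₗ[F] H y)
    (hid : ∀ x, i x x = LinearMap.id)
    (hcomp : ∀ x y z : ℝ≥0∞, x ≤ y → y ≤ z → (i y z).comp (i x y) = i x z)
    (htame : ∀ x y : ℝ≥0∞, 0 < x → x < y →
      FiniteDimensional F (LinearMap.range (i x y)))
    (a b c d : ℝ≥0∞) (ha : 0 < a) (hac : a < c) (hcd : c < d) (hdb : d ≤ b)
    (α β : ∀ x : ℝ≥0∞, H x → ℝ≥0∞)
    (hα : ∀ x h, α x h = sInf {y : ℝ≥0∞ | y < x ∧ h ∈ LinearMap.range (i y x)})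
    (hβ : ∀ x h, β x h = sInf {y : ℝ≥0∞ | x < y ∧ h ∈ LinearMap.ker (i x y)})
    (Vc Wc Zc : Submodule F (H c)) (Vd Wd Zd : Submodule F (H d))
    (hVc : ∀ h, h ∈ Vc ↔ α c h ≤ a ∧ β c h ≤ b)
    (hWc : ∀ h, h ∈ Wc ↔ α c h < a ∧ β c h ≤ b)
    (hZc : ∀ h, h ∈ Zc ↔ α c h ≤ a ∧ β c h < b)
    (hVd : ∀ h, h ∈ Vd ↔ α d h ≤ a ∧ β d h ≤ b)
    (hWd : ∀ h, h ∈ Wd ↔ α d h < a ∧ β d h ≤ b)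
    (hZd : ∀ h, h ∈ Zd ↔ α d h ≤ a ∧ β d h < b) :
    (∀ h ∈ Vc, i c d h ∈ Vd) ∧
    (∃ e : (Vc ⧸ Submodule.comap Vc.subtype (Wc ⊔ Zc)) ≃ₗ[F]
           (Vd ⧸ Submodule.comap Vd.subtype (Wd ⊔ Zd)),
      ∀ (h : H c) (hh : h ∈ Vc) (hh' : i c d h ∈ Vd),
        e (Submodule.Quotient.mk ⟨h, hh⟩) = Submodule.Quotient.mk ⟨i c d h, hh'⟩) ∧
    Module.finrank F (Vc ⧸ Submodule.comap Vc.subtype (Wc ⊔ Zc)) =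
      Module.finrank F (Vd ⧸ Submodule.comap Vd.subtype (Wd ⊔ Zd)) := by
  classical
  have icomp : ∀ x y z : ℝ≥0∞, x ≤ y → y ≤ z → ∀ h, i y z (i x y h) = i x z h := by
    intro x y z hxy hyz h
    rw [← hcomp x y z hxy hyz]; rfl
  have hrange : ∀ x y z : ℝ≥0∞, x ≤ y → y ≤ z →
      LinearMap.range (i x z) ≤ LinearMap.range (i y z) := by
    rintro x y z hxy hyz _ ⟨u, rfl⟩
    exact ⟨i x y u, icomp x y z hxy hyz u⟩
  have hker : ∀ x y z : ℝ≥0∞, x ≤ y → y ≤ z →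
      LinearMap.ker (i x y) ≤ LinearMap.ker (i x z) := by
    intro x y z hxy hyz h hh
    rw [LinearMap.mem_ker] at hh ⊢
    rw [← icomp x y z hxy hyz h, hh, map_zero]
  -- characterizations of α ≤ a, α < a, β ≤ b, β < b
  have hαle : ∀ (x : ℝ≥0∞) (h : H x), a < x →
      (α x h ≤ a ↔ ∀ y, a < y → y < x → h ∈ LinearMap.range (i y x)) := by
    intro x h hax
    constructor
    · intro hle y hay hyx
      have hlt : α x h < y := lt_of_le_of_lt hle hay
      rw [hα] at hlt
      obtain ⟨y', hy', hy'y⟩ := sInf_lt_iff.mp hlt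
      exact hrange y' y x hy'y.le hyx.le hy'.2
    · intro hall
      by_contra hlt
      push_neg at hlt
      obtain ⟨y, hay, hyα⟩ := exists_between (lt_min hlt hax)
      have hyx : y < x := hyα.trans_le (min_le_right _ _)
      have hyα' : y < α x h := hyα.trans_le (min_le_left _ _)
      have hle : α x h ≤ y := by
        rw [hα]; exact sInf_le ⟨hyx, hall y hay hyx⟩
      exact absurd hle (not_le.mpr hyα')
  have hαlt : ∀ (x : ℝ≥0∞) (h : H x),
      (α x h < a ↔ ∃ y, y < a ∧ y < x ∧ h ∈ LinearMap.range (i y x)) := by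
    intro x h
    rw [hα, sInf_lt_iff]
    constructor
    · rintro ⟨y, ⟨hyx, hy⟩, hya⟩; exact ⟨y, hya, hyx, hy⟩
    · rintro ⟨y, hya, hyx, hy⟩; exact ⟨y, ⟨hyx, hy⟩, hya⟩
  have hβle : ∀ (x : ℝ≥0∞) (h : H x), x ≤ b →
      (β x h ≤ b ↔ ∀ y, b < y → h ∈ LinearMap.ker (i x y)) := by
    intro x h hxb
    constructor
    · intro hle y hby
      have hlt : β x h < y := lt_of_le_of_lt hle hby
      rw [hβ] at hlt
      obtain ⟨y', hy', hy'y⟩ := sInf_lt_iff.mp hlt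
      exact hker x y' y hy'.1.le hy'y.le hy'.2
    · intro hall
      rcases eq_or_lt_of_le (le_top : b ≤ ⊤) with hb | hb
      · rw [hb]; exact le_top
      by_contra hlt
      push_neg at hlt
      obtain ⟨y, hby, hyβ⟩ := exists_between hlt
      have hle : β x h ≤ y := by
        rw [hβ]; exact sInf_le ⟨lt_of_le_of_lt hxb hby, hall y hby⟩
      exact absurd hle (not_le.mpr hyβ)
  have hβlt : ∀ (x : ℝ≥0∞) (h : H x),
      (β x h < b ↔ ∃ y, x < y ∧ y < b ∧ h ∈ LinearMap.ker (i x y)) := by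
    intro x h
    rw [hβ, sInf_lt_iff]
    constructor
    · rintro ⟨y, ⟨hxy, hy⟩, hyb⟩; exact ⟨y, hxy, hyb, hy⟩
    · rintro ⟨y, hxy, hyb, hy⟩; exact ⟨y, ⟨hxy, hy⟩, hyb⟩
  have had : a < d := hac.trans hcd
  have hcb : c ≤ b := (hcd.le.trans hdb)
  -- mapping facts
  have hmapα : ∀ h : H c, α c h ≤ a → α d (i c d h) ≤ a := by
    intro h hh
    rw [hαle d _ had]
    intro y hay hyd
    rcases lt_or_ge y c with hyc | hcy
    · obtain ⟨u, hu⟩ := (hαle c h hac).mp hh y hay hyc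
      exact ⟨u, by rw [← icomp y c d hyc.le hcd.le u, hu]⟩
    · exact ⟨i c y h, icomp c y d hcy hyd.le h⟩
  have hmapβ : ∀ h : H c, β c h ≤ b → β d (i c d h) ≤ b := by
    intro h hh
    rw [hβle d _ hdb]
    intro y hby
    have hcy : i c y h = 0 := (hβle c h hcb).mp hh y hby
    rw [LinearMap.mem_ker, icomp c d y hcd.le (hdb.trans hby.le), hcy]
  have hmapV : ∀ h ∈ Vc, i c d h ∈ Vd := by
    intro h hh
    rw [hVc] at hh
    rw [hVd]
    exact ⟨hmapα h hh.1, hmapβ h hh.2⟩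
  have hmapW : ∀ h ∈ Wc, i c d h ∈ Wd := by
    intro h hh
    rw [hWc] at hh
    rw [hWd]
    obtain ⟨y, hya, hyc, u, hu⟩ := (hαlt c h).mp hh.1
    refine ⟨(hαlt d _).mpr ⟨y, hya, hyc.trans hcd, ⟨u, ?_⟩⟩, hmapβ h hh.2⟩
    rw [← icomp y c d hyc.le hcd.le u, hu]
  have hmapZ : ∀ h ∈ Zc, i c d h ∈ Zd := by
    intro h hh
    rw [hZc] at hh
    obtain ⟨y, hcy, hyb, hky⟩ := (hβlt c h).mp hh.2
    rw [LinearMap.mem_ker] at hky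
    rcases le_or_gt y d with hyd | hdy
    · have : i c d h = 0 := by rw [← icomp c y d hcy.le hyd, hky, map_zero]
      rw [this]; exact Zd.zero_mem
    · rw [hZd]
      refine ⟨hmapα h hh.1, (hβlt d _).mpr ⟨y, hdy, hyb, ?_⟩⟩
      rw [LinearMap.mem_ker, icomp c d y hcd.le hdy.le, hky]
  -- surjectivity (uses q-tameness)
  have hsurj_core : ∀ g : H d, g ∈ Vd → ∃ h : H c, h ∈ Vc ∧ i c d h = g := by
    intro g hg
    rw [hVd] at hg
    set T : Set ℕ := (fun y => Module.finrank F (LinearMap.range (i y c))) '' (Set.Ioo a c)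
      with hT
    obtain ⟨y0, hy0⟩ := exists_between hac
    have hTne : T.Nonempty := ⟨_, y0, hy0, rfl⟩
    obtain ⟨y1, hy1, hy1n⟩ := Nat.sInf_mem hTne
    obtain ⟨g0, hg0⟩ := (hαle d g had).mp hg.1 y1 hy1.1 (hy1.2.trans hcd)
    refine ⟨i y1 c g0, ?_, by rw [icomp y1 c d hy1.2.le hcd.le, hg0]⟩
    rw [hVc]
    constructor
    · rw [hαle c _ hac]
      intro y hay hyc
      rcases le_or_gt y1 y with hy1y | hyy1
      · exact hrange y1 y c hy1y hyc.le ⟨g0, rfl⟩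
      · have hle : LinearMap.range (i y c) ≤ LinearMap.range (i y1 c) :=
          hrange y y1 c hyy1.le hy1.2.le
        haveI := htame y1 c (ha.trans hy1.1) hy1.2
        have heq : LinearMap.range (i y c) = LinearMap.range (i y1 c) := by
          refine Submodule.eq_of_le_of_finrank_le hle ?_
          have hy1n' : Module.finrank F (LinearMap.range (i y1 c)) = sInf T := hy1n
          rw [hy1n']
          exact Nat.sInf_le ⟨y, ⟨hay, hyc⟩, rfl⟩
        rw [heq]; exact ⟨g0, rfl⟩
    · rw [hβle c _ hcb]
      intro y hby
      have hgk : i d y g = 0 := (hβle d g hdb).mp hg.2 y hby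
      rw [LinearMap.mem_ker, ← icomp c d y hcd.le (hdb.trans hby.le),
        icomp y1 c d hy1.2.le hcd.le, hg0, hgk]
  -- injectivity
  have hinj_core : ∀ h : H c, h ∈ Vc → i c d h ∈ Wd ⊔ Zd → h ∈ Wc ⊔ Zc := by
    intro h hh hsum
    rw [hVc] at hh
    obtain ⟨w, hw, z, hz, hwz⟩ := Submodule.mem_sup.mp hsum
    rw [hWd] at hw
    rw [hZd] at hz
    obtain ⟨y0, hy0a, hy0d, w0, hw0⟩ := (hαlt d w).mp hw.1
    set w' := i y0 c w0 with hw'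
    have hy0c : y0 < c := hy0a.trans hac
    have hiw' : i c d w' = w := by rw [hw', icomp y0 c d hy0c.le hcd.le, hw0]
    have hw'W : w' ∈ Wc := by
      rw [hWc]
      constructor
      · exact (hαlt c w').mpr ⟨y0, hy0a, hy0c, ⟨w0, rfl⟩⟩
      · rw [hβle c w' hcb]
        intro y hby
        have hwk : i d y w = 0 := (hβle d w hdb).mp hw.2 y hby
        rw [LinearMap.mem_ker, ← icomp c d y hcd.le (hdb.trans hby.le), hiw', hwk]
    have hzc : h - w' ∈ Zc := by
      have hizd : i c d (h - w') = z := by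
        rw [map_sub, hiw', ← hwz]; abel
      rw [hZc]
      constructor
      · rw [hαle c _ hac]
        intro y hay hyc
        refine sub_mem ((hαle c h hac).mp hh.1 y hay hyc) ?_
        exact hrange y0 y c (hy0a.trans hay).le hyc.le ⟨w0, rfl⟩
      · obtain ⟨y, hdy, hyb, hky⟩ := (hβlt d z).mp hz.2
        rw [LinearMap.mem_ker] at hky
        refine (hβlt c _).mpr ⟨y, hcd.trans hdy, hyb, ?_⟩
        rw [LinearMap.mem_ker, ← icomp c d y hcd.le hdy.le, hizd, hky]
    exact Submodule.mem_sup.mpr ⟨w', hw'W, h - w', hzc, by abel⟩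
  -- assemble
  set Kc := Submodule.comap Vc.subtype (Wc ⊔ Zc) with hKc
  set Kd := Submodule.comap Vd.subtype (Wd ⊔ Zd) with hKd
  set f : Vc →ₗ[F] Vd ⧸ Kd := Kd.mkQ.comp ((i c d).restrict hmapV) with hf
  have hfmk : ∀ (h : H c) (hh : h ∈ Vc),
      f ⟨h, hh⟩ = Submodule.Quotient.mk ⟨i c d h, hmapV h hh⟩ := by
    intro h hh; rfl
  have hfsurj : Function.Surjective f := by
    intro q
    obtain ⟨⟨g, hg⟩, rfl⟩ := Submodule.Quotient.mk_surjective Kd q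
    obtain ⟨h, hh, hih⟩ := hsurj_core g hg
    refine ⟨⟨h, hh⟩, ?_⟩
    rw [hfmk h hh]
    congr 1
    exact Subtype.ext hih
  have hker_f : LinearMap.ker f = Kc := by
    ext ⟨h, hh⟩
    rw [LinearMap.mem_ker, hfmk h hh, Submodule.Quotient.mk_eq_zero]
    change (i c d h ∈ Wd ⊔ Zd) ↔ (h ∈ Wc ⊔ Zc)
    constructor
    · exact hinj_core h hh
    · intro hmem
      obtain ⟨w, hw, z, hz, hwz⟩ := Submodule.mem_sup.mp hmem
      exact Submodule.mem_sup.mpr ⟨i c d w, hmapW w hw, i c d z, hmapZ z hz,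
        by rw [← map_add, hwz]⟩
  refine ⟨hmapV, ?_⟩
  set e : (Vc ⧸ Kc) ≃ₗ[F] (Vd ⧸ Kd) :=
    (Submodule.quotEquivOfEq Kc (LinearMap.ker f) hker_f.symm).trans
      (f.quotKerEquivOfSurjective hfsurj) with he
  have happ : ∀ (h : H c) (hh : h ∈ Vc) (hh' : i c d h ∈ Vd),
      e (Submodule.Quotient.mk ⟨h, hh⟩) = Submodule.Quotient.mk ⟨i c d h, hh'⟩ := by
    intro h hh hh'
    have h1 : e (Submodule.Quotient.mk ⟨h, hh⟩)
        = (f.quotKerEquivOfSurjective hfsurj) (Submodule.Quotient.mk ⟨h, hh⟩) := by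
      rw [he, LinearEquiv.trans_apply, Submodule.quotEquivOfEq_mk]
    rw [h1]
    have h2 : (f.quotKerEquivOfSurjective hfsurj) (Submodule.Quotient.mk ⟨h, hh⟩)
        = f ⟨h, hh⟩ := rfl
    rw [h2, hfmk h hh]
  exact ⟨⟨e, happ⟩, e.finrank_eq⟩
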